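/- Fix integers S ≥ 0, g ≥ 1 and m ≥ 1 with S ≤ m·g. The function f : P_{S,g,m} → {0, 1, …, N_{S,g,m} − 1}, defined by f(b) = 0 if S = 0 and otherwise f(b) = Σ_{i=0}^{r−1} N_{S_i, b_{i+1}−1, m−i}, where r is the largest index with b_r ≠ 0 and S_i = S − Σ_{j=1}^{i} b_j, is a bijection. -/

import Mathlib

/-- `P_{S,k,n}`: the set of non-increasing `n`-tuples of natural numbers with all
coordinates at most `k` and coordinate sum exactly `S`. -/
def PSkn (S k n : ℕ) : Set (Fin n → ℕ) :=
  {b | Antitone b ∧ (∀ i, b i ≤ k) ∧ (∑ i, b i) = S}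

/-- `N_{S,k,n}`: the cardinality of `P_{S,k,n}`. -/
noncomputable def NSkn (S k n : ℕ) : ℕ :=
  Nat.card (PSkn S k n)

/-- The index `f(b)` of a tuple `b ∈ P_{S,g,m}`: writing `r` for the number of nonzero
coordinates of `b` (the largest index with `b_r ≠ 0`, since `b` is non-increasing) and
`S_i = S − Σ_{j=1}^{i} b_j`, we set `f(b) = Σ_{i=0}^{r−1} N_{S_i, b_{i+1}−1, m−i}`
(for `S = 0` this is the empty sum, so `f` of the zero tuple is `0`). -/
noncomputable def fIdx (S : ℕ) {m : ℕ} (b : Fin m → ℕ) : ℕ :=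
  ∑ i : Fin m,
    if (i : ℕ) < (Finset.univ.filter (fun j : Fin m => b j ≠ 0)).card then
      NSkn (S - ∑ j ∈ Finset.univ.filter (fun j : Fin m => j < i), b j)
        (b i - 1) (m - (i : ℕ))
    else 0

/-- Property 8 of the paper: `f` is a bijection from `P_{S,g,m}` onto
`{0, 1, …, N_{S,g,m} − 1}`. -/

lemma PSkn_finite (S k n : ℕ) : (PSkn S k n).Finite := by
  apply Set.Finite.subset (Set.Finite.pi (fun _ : Fin n => Set.finite_Iic k))
  intro b hb
  intro i _
  exact hb.2.1 i

lemma NSkn_eq (S k n : ℕ) : NSkn S k n = (PSkn S k n).ncard :=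
  Nat.card_coe_set_eq _

lemma NSkn_mono {S n k k' : ℕ} (h : k ≤ k') : NSkn S k n ≤ NSkn S k' n := by
  rw [NSkn_eq, NSkn_eq]
  exact Set.ncard_le_ncard
    (fun b hb => ⟨hb.1, fun i => le_trans (hb.2.1 i) h, hb.2.2⟩) (PSkn_finite _ _ _)

lemma PSkn_zero_sum (g n : ℕ) : PSkn 0 g n = {fun _ => 0} := by
  ext b
  constructor
  · rintro ⟨-, -, hs⟩
    have h0 : ∀ i ∈ Finset.univ, b i = 0 := (Finset.sum_eq_zero_iff).mp hs
    have : b = fun _ => 0 := funext fun i => h0 i (Finset.mem_univ i)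
    simpa using this
  · rintro hb
    have hb' : b = fun _ => 0 := hb
    subst hb'
    exact ⟨antitone_const, fun i => Nat.zero_le _, Finset.sum_const_zero⟩

lemma NSkn_S0 (g n : ℕ) : NSkn 0 g n = 1 := by
  rw [NSkn_eq, PSkn_zero_sum]; exact Set.ncard_singleton _

lemma PSkn_k0 {S n : ℕ} (hS : 1 ≤ S) : PSkn S 0 n = ∅ := by
  ext b
  simp only [Set.mem_empty_iff_false, iff_false]
  rintro ⟨-, hbd, hs⟩
  have : ∑ i, b i = 0 := Finset.sum_eq_zero (fun i _ => Nat.le_zero.mp (hbd i))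
  omega

lemma sum_le_of_mem {S k n : ℕ} {b : Fin n → ℕ} (hb : b ∈ PSkn S k n) : S ≤ n * k := by
  obtain ⟨-, hbd, hs⟩ := hb
  calc S = ∑ i, b i := hs.symm
    _ ≤ Finset.univ.card • k := Finset.sum_le_card_nsmul _ _ _ (fun i _ => hbd i)
    _ = n * k := by simp [mul_comm]

lemma PSkn_stable {S k n : ℕ} (h : S < k) : PSkn S k n = PSkn S (k - 1) n := by
  ext b
  constructor <;> rintro ⟨ha, hbd, hs⟩ <;> refine ⟨ha, fun i => ?_, hs⟩
  · have : b i ≤ ∑ j, b j := Finset.single_le_sum (fun j _ => Nat.zero_le _) (Finset.mem_univ i)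
    omega
  · have := hbd i; omega

lemma antitone_tail {n : ℕ} {b : Fin (n+1) → ℕ} (hb : Antitone b) :
    Antitone (Fin.tail b) := fun i j h => hb (Fin.succ_le_succ_iff.mpr h)

lemma antitone_cons {n : ℕ} {c : Fin n → ℕ} {t : ℕ} (hc : Antitone c)
    (ht : ∀ i, c i ≤ t) : Antitone (Fin.cons t c) := by
  intro i j hij
  induction i using Fin.cases with
  | zero =>
    induction j using Fin.cases with
    | zero => exact le_refl _
    | succ j => simpa using ht j
  | succ i =>
    induction j using Fin.cases with
    | zero =>
      exact absurd (Fin.le_zero_iff.mp hij) (Fin.succ_ne_zero i)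
    | succ j =>
      simp only [Fin.cons_succ]
      exact hc (Fin.succ_le_succ_iff.mp hij)

lemma tail_mem {n S k : ℕ} {b : Fin (n+1) → ℕ} (hb : b ∈ PSkn S k (n+1)) :
    Fin.tail b ∈ PSkn (S - b 0) (b 0) n := by
  obtain ⟨ha, hbd, hs⟩ := hb
  refine ⟨antitone_tail ha, fun i => ha (Fin.zero_le _), ?_⟩
  have h1 : ∑ i, b i = b 0 + ∑ i : Fin n, b i.succ := Fin.sum_univ_succ b
  have h2 : ∑ i, Fin.tail b i = ∑ i : Fin n, b i.succ := rfl
  omega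

lemma cons_mem {n S k t : ℕ} (htS : t ≤ S) (htk : t ≤ k) {c : Fin n → ℕ}
    (hc : c ∈ PSkn (S - t) t n) : Fin.cons t c ∈ PSkn S k (n+1) := by
  obtain ⟨ha, hbd, hs⟩ := hc
  refine ⟨antitone_cons ha hbd, ?_, ?_⟩
  · intro i
    induction i using Fin.cases with
    | zero => simpa using htk
    | succ i => simpa using le_trans (hbd i) htk
  · rw [Fin.sum_univ_succ]
    simp only [Fin.cons_zero, Fin.cons_succ]
    omega

lemma b0_le_sum {n : ℕ} (b : Fin (n+1) → ℕ) : b 0 ≤ ∑ i, b i :=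
  Finset.single_le_sum (fun j _ => Nat.zero_le _) (Finset.mem_univ 0)

lemma b0_pos {n S k : ℕ} (hS : 1 ≤ S) {b : Fin (n+1) → ℕ} (hb : b ∈ PSkn S k (n+1)) :
    1 ≤ b 0 := by
  by_contra h
  have hb0 : b 0 = 0 := by omega
  have : ∀ i, b i = 0 := fun i => Nat.le_zero.mp (hb0 ▸ hb.1 (Fin.zero_le i))
  have : ∑ i, b i = 0 := Finset.sum_eq_zero (fun i _ => this i)
  have := hb.2.2
  omega

lemma NSkn_rec {S t n : ℕ} (ht : 1 ≤ t) (htS : t ≤ S) :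
    NSkn S t (n+1) = NSkn S (t-1) (n+1) + NSkn (S-t) t n := by
  rw [NSkn_eq, NSkn_eq, NSkn_eq]
  set B : Set (Fin (n+1) → ℕ) := {b ∈ PSkn S t (n+1) | b 0 = t} with hB
  have hBsub : B ⊆ PSkn S t (n+1) := fun b hb => hb.1
  have hsplit : PSkn S t (n+1) = PSkn S (t-1) (n+1) ∪ B := by
    ext b
    constructor
    · intro hb
      obtain ⟨ha, hbd, hs⟩ := hb
      by_cases h0 : b 0 = t
      · exact Or.inr ⟨⟨ha, hbd, hs⟩, h0⟩
      · left
        have hb0 : b 0 ≤ t - 1 := by have := hbd 0; omega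
        exact ⟨ha, fun i => le_trans (ha (Fin.zero_le i)) hb0, hs⟩
    · rintro (⟨ha, hbd, hs⟩ | hb)
      · exact ⟨ha, fun i => le_trans (hbd i) (by omega), hs⟩
      · exact hb.1
  have hdisj : Disjoint (PSkn S (t-1) (n+1)) B := by
    rw [Set.disjoint_left]
    rintro b ⟨-, hbd, -⟩ ⟨-, h0⟩
    have := hbd 0
    omega
  rw [hsplit, Set.ncard_union_eq hdisj (PSkn_finite _ _ _)
      ((PSkn_finite S t (n+1)).subset hBsub)]
  congr 1
  have hinj : Set.InjOn Fin.tail B := by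
    rintro b hb b' hb' htl
    funext i
    induction i using Fin.cases with
    | zero => rw [hb.2, hb'.2]
    | succ i => exact congrFun htl i
  have himg : Fin.tail '' B = PSkn (S-t) t n := by
    ext c
    constructor
    · rintro ⟨b, hb, rfl⟩
      have := tail_mem hb.1
      rwa [hb.2] at this
    · intro hc
      refine ⟨Fin.cons t c, ⟨cons_mem htS le_rfl hc, ?_⟩, ?_⟩
      · simp
      · simp [Fin.tail_cons]
  rw [← himg, Set.ncard_image_of_injOn hinj]

lemma fIdx_zero {m S : ℕ} {b : Fin m → ℕ} (hb : ∀ i, b i = 0) : fIdx S b = 0 := by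
  unfold fIdx
  apply Finset.sum_eq_zero
  intro i _
  have h : (Finset.univ.filter (fun j : Fin m => b j ≠ 0)) = ∅ := by
    apply Finset.filter_eq_empty_iff.mpr
    intro j _
    simp [hb j]
  rw [h]
  simp

lemma fIdx_succ {n S : ℕ} (b : Fin (n+1) → ℕ) (hb0 : b 0 ≠ 0) :
    fIdx S b = NSkn S (b 0 - 1) (n+1) + fIdx (S - b 0) (Fin.tail b) := by
  unfold fIdx
  have hr : (Finset.univ.filter (fun j : Fin (n+1) => b j ≠ 0)).card
      = (Finset.univ.filter (fun j : Fin n => Fin.tail b j ≠ 0)).card + 1 := by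
    rw [Finset.card_filter, Finset.card_filter, Fin.sum_univ_succ]
    simp [hb0, Fin.tail, add_comm]
    exact Finset.sum_congr rfl (fun i _ => by split_ifs <;> simp_all)
  rw [Fin.sum_univ_succ]
  congr 1
  · rw [if_pos]
    · have h0 : (Finset.univ.filter (fun j : Fin (n+1) => j < 0)) = ∅ := by
        apply Finset.filter_eq_empty_iff.mpr
        intro j _
        exact Fin.not_lt_zero j
      rw [h0]
      simp
    · rw [hr, Fin.val_zero]; omega
  · apply Finset.sum_congr rfl
    intro i _
    have hcond : (((i.succ : Fin (n+1)) : ℕ) <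
        (Finset.univ.filter (fun j : Fin (n+1) => b j ≠ 0)).card)
        ↔ ((i : ℕ) < (Finset.univ.filter (fun j : Fin n => Fin.tail b j ≠ 0)).card) := by
      rw [hr, Fin.val_succ]
      omega
    have hsum : ∑ j ∈ Finset.univ.filter (fun j : Fin (n+1) => j < i.succ), b j
        = b 0 + ∑ j ∈ Finset.univ.filter (fun j : Fin n => j < i), Fin.tail b j := by
      rw [Finset.sum_filter, Finset.sum_filter, Fin.sum_univ_succ]
      simp [Fin.succ_pos, Fin.succ_lt_succ_iff, Fin.tail]
    by_cases h : (i : ℕ) < (Finset.univ.filter (fun j : Fin n => Fin.tail b j ≠ 0)).card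
    · rw [if_pos (hcond.mpr h), if_pos h, hsum]
      have h1 : S - (b 0 + ∑ j ∈ Finset.univ.filter (fun j : Fin n => j < i), Fin.tail b j)
          = S - b 0 - ∑ j ∈ Finset.univ.filter (fun j : Fin n => j < i), Fin.tail b j := by
        omega
      rw [h1]
      have h2 : b i.succ = Fin.tail b i := rfl
      have h3 : (n + 1) - ((i.succ : Fin (n+1)) : ℕ) = n - (i : ℕ) := by
        rw [Fin.val_succ]; omega
      rw [h2, h3]
    · rw [if_neg (fun hc => h (hcond.mp hc)), if_neg h]

lemma bijS0 (g m : ℕ) :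
    Set.BijOn (fIdx 0 (m := m)) (PSkn 0 g m) (Set.Iio (NSkn 0 g m)) := by
  rw [NSkn_S0, PSkn_zero_sum]
  have hf : fIdx 0 (fun _ : Fin m => 0) = 0 := fIdx_zero (fun _ => rfl)
  refine ⟨?_, ?_, ?_⟩
  · rintro b rfl
    simp [hf]
  · rintro b rfl b' rfl _
    rfl
  · intro y hy
    have : y = 0 := by simpa using hy
    subst this
    exact ⟨fun _ => 0, rfl, hf⟩

lemma bij_all : ∀ m S g : ℕ, 1 ≤ g → S ≤ m * g →
    Set.BijOn (fIdx S (m := m)) (PSkn S g m) (Set.Iio (NSkn S g m)) := by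
  intro m
  induction m with
  | zero =>
    intro S g hg hS
    have hS0 : S = 0 := by omega
    subst hS0
    exact bijS0 g 0
  | succ n ih =>
    intro S g hg hS
    rcases Nat.eq_zero_or_pos S with rfl | hSpos
    · exact bijS0 g (n+1)
    -- Facts about any b ∈ P
    have key : ∀ b ∈ PSkn S g (n+1),
        1 ≤ b 0 ∧ b 0 ≤ S ∧ b 0 ≤ g ∧
        Fin.tail b ∈ PSkn (S - b 0) (b 0) n ∧
        fIdx S b = NSkn S (b 0 - 1) (n+1) + fIdx (S - b 0) (Fin.tail b) ∧
        fIdx (S - b 0) (Fin.tail b) < NSkn (S - b 0) (b 0) n := by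
      intro b hb
      have h1 : 1 ≤ b 0 := b0_pos hSpos hb
      have h2 : b 0 ≤ S := hb.2.2 ▸ b0_le_sum b
      have h3 : b 0 ≤ g := hb.2.1 0
      have h4 := tail_mem hb
      have h5 := fIdx_succ (S := S) b (by omega)
      have h6 : fIdx (S - b 0) (Fin.tail b) < NSkn (S - b 0) (b 0) n :=
        (ih (S - b 0) (b 0) h1 (sum_le_of_mem h4)).1 h4
      exact ⟨h1, h2, h3, h4, h5, h6⟩
    have hlt : ∀ b ∈ PSkn S g (n+1), fIdx S b < NSkn S (b 0) (n+1) := by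
      intro b hb
      obtain ⟨h1, h2, h3, h4, h5, h6⟩ := key b hb
      rw [NSkn_rec h1 h2, h5]
      omega
    have hge : ∀ b ∈ PSkn S g (n+1), NSkn S (b 0 - 1) (n+1) ≤ fIdx S b := by
      intro b hb
      obtain ⟨h1, h2, h3, h4, h5, h6⟩ := key b hb
      omega
    refine ⟨?_, ?_, ?_⟩
    · -- MapsTo
      intro b hb
      have := hlt b hb
      have hmono := NSkn_mono (S := S) (n := n+1) ((key b hb).2.2.1)
      exact Set.mem_Iio.mpr (lt_of_lt_of_le this hmono)
    · -- InjOn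
      intro b hb b' hb' heq
      obtain ⟨h1, h2, h3, h4, h5, h6⟩ := key b hb
      obtain ⟨h1', h2', h3', h4', h5', h6'⟩ := key b' hb'
      have hb00 : b 0 = b' 0 := by
        rcases lt_trichotomy (b 0) (b' 0) with hlt' | heq' | hgt'
        · exfalso
          have e1 := hlt b hb
          have e2 := hge b' hb'
          have e3 : NSkn S (b 0) (n+1) ≤ NSkn S (b' 0 - 1) (n+1) :=
            NSkn_mono (by omega)
          omega
        · exact heq'
        · exfalso
          have e1 := hlt b' hb'
          have e2 := hge b hb
          have e3 : NSkn S (b' 0) (n+1) ≤ NSkn S (b 0 - 1) (n+1) :=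
            NSkn_mono (by omega)
          omega
      rw [hb00] at h4
      have htaileq : fIdx (S - b' 0) (Fin.tail b) = fIdx (S - b' 0) (Fin.tail b') := by
        rw [h5, h5'] at heq
        rw [hb00] at heq
        omega
      have := (ih (S - b' 0) (b' 0) h1' (sum_le_of_mem h4)).2.1 h4 h4' htaileq
      funext i
      induction i using Fin.cases with
      | zero => exact hb00
      | succ i => exact congrFun this i
    · -- SurjOn
      intro y hy
      simp only [Set.mem_Iio] at hy
      have hex : ∃ t, y < NSkn S t (n+1) := ⟨g, hy⟩
      classical
      set t := Nat.find hex with htdef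
      have ht : y < NSkn S t (n+1) := Nat.find_spec hex
      have htg : t ≤ g := Nat.find_le hy
      have ht1 : 1 ≤ t := by
        by_contra h
        have ht0 : t = 0 := by omega
        rw [ht0, NSkn_eq, PSkn_k0 hSpos] at ht
        simp at ht
      have hprev : NSkn S (t-1) (n+1) ≤ y := by
        have := Nat.find_min hex (show t - 1 < t by omega)
        omega
      have htS : t ≤ S := by
        by_contra h
        have hlt2 : S < t := by omega
        have : NSkn S t (n+1) = NSkn S (t-1) (n+1) := by
          rw [NSkn_eq, NSkn_eq, PSkn_stable hlt2]
        omega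
      rw [NSkn_rec ht1 htS] at ht
      have hy' : y - NSkn S (t-1) (n+1) < NSkn (S-t) t n := by omega
      have hne : (PSkn (S-t) t n).Nonempty := by
        apply Set.nonempty_of_ncard_ne_zero
        rw [← NSkn_eq]
        omega
      obtain ⟨c0, hc0⟩ := hne
      have hSle : S - t ≤ n * t := sum_le_of_mem hc0
      obtain ⟨c, hc, hfc⟩ := (ih (S-t) t ht1 hSle).2.2 (Set.mem_Iio.mpr hy')
      refine ⟨(Fin.cons t c : Fin (n+1) → ℕ), cons_mem htS htg hc, ?_⟩
      have h0 : (Fin.cons t c : Fin (n+1) → ℕ) 0 = t := rfl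
      have htl : Fin.tail (Fin.cons t c : Fin (n+1) → ℕ) = c := by funext i; simp [Fin.tail]
      rw [fIdx_succ _ (by rw [h0]; omega), h0, htl, hfc]
      omega

theorem fIdx_bijective (S g m : ℕ) (hg : 1 ≤ g) (hm : 1 ≤ m) (hS : S ≤ m * g) :
    Set.BijOn (fIdx S (m := m)) (PSkn S g m) (Set.Iio (NSkn S g m)) := by
  exact bij_all m S g hg hS
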